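/- Let p be an odd prime and K a finite commutative group with Monoid.exponent K = p^e. Let g be a natural number whose residue class generates the unit group (ZMod (p^e))ˣ, i.e. every unit of ℤ/p^e is a power of the class of g. Then for all a, b ∈ K: there exists j : ℕ with b = a^(g^j) if and only if Subgroup.zpowers a = Subgroup.zpowers b. -/

import Mathlib

lemma zpowers_pow_eq_of_coprime {K : Type*} [CommGroup K] (a : K)
    (hn : 0 < orderOf a) {m : ℕ} (h : m.Coprime (orderOf a)) :
    Subgroup.zpowers (a ^ m) = Subgroup.zpowers a := by
  apply le_antisymm
  · rw [Subgroup.zpowers_le]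
    exact Subgroup.npow_mem_zpowers a m
  · rw [Subgroup.zpowers_le]
    have hm : m ^ Nat.totient (orderOf a) ≡ 1 [MOD orderOf a] := Nat.ModEq.pow_totient h
    have ht : 0 < Nat.totient (orderOf a) := Nat.totient_pos.mpr hn
    have key : (a ^ m) ^ m ^ (Nat.totient (orderOf a) - 1) = a := by
      rw [← pow_mul, ← pow_succ', Nat.sub_add_cancel ht]
      calc a ^ m ^ Nat.totient (orderOf a) = a ^ 1 := pow_eq_pow_iff_modEq.mpr hm
        _ = a := pow_one a
    exact Subgroup.mem_zpowers_iff.mpr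
      ⟨(m ^ (Nat.totient (orderOf a) - 1) : ℕ), by rw [zpow_natCast]; exact key⟩

/-- Let `p` be an odd prime and `K` a finite commutative group of exponent `p^e`.
If the residue class of `g` generates `(ℤ/p^e)ˣ`, then `b` lies in the orbit of `a`
under iteration of `x ↦ x^g` if and only if `a` and `b` generate the same cyclic
subgroup. -/
theorem orbit_pow_iff_zpowers_eq_of_odd_prime
    (p : ℕ) (hp : p.Prime) (hp2 : p ≠ 2)
    (K : Type*) [CommGroup K] [Finite K] (e : ℕ)
    (hexp : Monoid.exponent K = p ^ e)
    (g : ℕ)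
    (hg : ∀ u : (ZMod (p ^ e))ˣ, ∃ j : ℕ, (u : ZMod (p ^ e)) = (g : ZMod (p ^ e)) ^ j)
    (a b : K) :
    (∃ j : ℕ, b = a ^ g ^ j) ↔ Subgroup.zpowers a = Subgroup.zpowers b := by
  have hfin : ∀ x : K, 0 < orderOf x := fun x => (orderOf_pos x)
  have hdvd : ∀ x : K, orderOf x ∣ p ^ e := fun x => hexp ▸ Monoid.order_dvd_exponent x
  -- if some element has order > 1 then e ≥ 1 and we can show g is a unit mod p^e
  have hgunit : ∀ x : K, 1 < orderOf x → Nat.Coprime g (orderOf x) := by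
    intro x hx
    have he : 1 < p ^ e := lt_of_lt_of_le hx (Nat.le_of_dvd (pow_pos hp.pos e) (hdvd x))
    have he1 : e ≠ 0 := by rintro rfl; simp at he
    have hp3 : 3 ≤ p := by have := hp.two_le; omega
    have h2 : 2 < p ^ e := lt_of_lt_of_le (by omega) (Nat.le_self_pow he1 p)
    haveI : Fact (2 < p ^ e) := ⟨h2⟩
    haveI : NeZero (p ^ e) := ⟨by omega⟩
    obtain ⟨j0, hj0⟩ := hg (-1)
    have hj0ne : j0 ≠ 0 := by
      rintro rfl
      simp only [pow_zero, Units.val_neg, Units.val_one] at hj0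
      exact ZMod.neg_one_ne_one hj0
    have hgu : IsUnit ((g : ZMod (p ^ e))) := by
      have : IsUnit ((g : ZMod (p ^ e)) ^ j0) := by
        rw [← hj0]; exact (-1 : (ZMod (p ^ e))ˣ).isUnit
      exact isUnit_of_dvd_unit (dvd_pow_self _ hj0ne) this
    have hcop : Nat.Coprime g (p ^ e) := (ZMod.isUnit_iff_coprime g (p ^ e)).mp hgu
    exact Nat.Coprime.coprime_dvd_right (hdvd x) hcop
  constructor
  · rintro ⟨j, rfl⟩
    rcases Nat.lt_or_ge 1 (orderOf a) with hord | hord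
    · exact (zpowers_pow_eq_of_coprime a (hfin a)
        (Nat.Coprime.pow_left j (hgunit a hord))).symm
    · -- orderOf a = 1, so a = 1
      have : orderOf a = 1 := le_antisymm hord (hfin a)
      have ha : a = 1 := orderOf_eq_one_iff.mp this
      subst ha; simp
  · intro h
    -- b ∈ powers a
    have hb : b ∈ Subgroup.zpowers a := h ▸ Subgroup.mem_zpowers b
    obtain ⟨k, hk0⟩ := mem_powers_iff_mem_zpowers.mpr hb
    have hk : a ^ k = b := hk0
    have hord : orderOf a = orderOf b := by
      rw [← Nat.card_zpowers, ← Nat.card_zpowers, h]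
    rcases Nat.lt_or_ge 1 (orderOf a) with hlt | hle
    · -- gcd (orderOf a) k = 1
      have hko : orderOf (a ^ k) = orderOf a := by rw [hk, ← hord]
      rw [orderOf_pow] at hko
      have hgcd : Nat.gcd (orderOf a) k = 1 := by
        rcases (Nat.div_eq_self.mp hko) with h0 | h1
        · omega
        · exact h1
      have hck : Nat.Coprime k (orderOf a) := Nat.coprime_comm.mp hgcd
      -- p divides orderOf a
      have hpord : p ∣ orderOf a := by
        obtain ⟨f, hf, hfe⟩ := (Nat.dvd_prime_pow hp).mp (hdvd a)
        have hf0 : f ≠ 0 := by rintro rfl; rw [pow_zero] at hfe; omega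
        exact hfe ▸ dvd_pow_self p hf0
      have hckp : Nat.Coprime k p := Nat.Coprime.coprime_dvd_right hpord hck
      have hckpe : Nat.Coprime k (p ^ e) := Nat.Coprime.pow_right e hckp
      haveI : NeZero (p ^ e) := ⟨pow_ne_zero e hp.pos.ne'⟩
      obtain ⟨j, hj⟩ := hg (ZMod.unitOfCoprime k hckpe)
      rw [ZMod.coe_unitOfCoprime] at hj
      have hcast := congrArg (ZMod.castHom (hdvd a) (ZMod (orderOf a))) hj
      simp only [map_natCast, map_pow] at hcast
      have hmod : k ≡ g ^ j [MOD orderOf a] := by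
        rw [← ZMod.natCast_eq_natCast_iff]
        push_cast
        exact hcast
      exact ⟨j, by rw [← hk, pow_eq_pow_iff_modEq.mpr hmod]⟩
    · have : orderOf a = 1 := le_antisymm hle (hfin a)
      have ha : a = 1 := orderOf_eq_one_iff.mp this
      have hb1 : b = 1 := by
        rw [← hk, ha, one_pow]
      exact ⟨0, by simp [ha, hb1]⟩
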